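/- If G is a finite connected graph with more than 2 nodes and C is a clustering of its node set produced by the clustering algorithm Cluster, then the number of nonempty clusters in C is at most |V| − 2; that is, applying Cluster to a connected graph with n > 2 nodes reduces the number of nodes (when clusters are regarded as the nodes of the hypergraph) by at least 2. -/
import Mathlib


/-!
Formalisation of the clustering algorithm `Cluster` from
"Optimisation by Pre-Compilation".

A graph is given by a vertex type `V` with a symmetric adjacency
relation `Adj`.  `Deg N n` is the degree of `n` within the node set `N`,
`NDeg N n` the normalised degree.  An execution of the (nondeterministic)
clustering algorithm is modelled by the inductive predicates
`Propagates` (the propagation phase growing one cluster) and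
`ClusterExec` (the driver, producing the list of clusters).
-/

namespace P2P

variable {V : Type*}

/-- The degree of node `n` within the set of nodes `N`:
the number of nodes in `N \ {n}` adjacent to `n`. -/
noncomputable def Deg (Adj : V → V → Prop) (N : Set V) (n : V) : ℕ :=
  {m ∈ N | m ≠ n ∧ Adj m n}.ncard

/-- The normalised degree of node `n` within the set of nodes `N`:
the number of nodes in `N \ {n}` adjacent to `n` whose degree exceeds `1`. -/
noncomputable def NDeg (Adj : V → V → Prop) (N : Set V) (n : V) : ℕ :=
  {m ∈ N | m ≠ n ∧ Adj m n ∧ 1 < Deg Adj N m}.ncard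

/-- The extension set `I` of the propagation phase: the unclustered nodes
(of `U`) adjacent to some node `n'` of the current cluster `C` with
`NDeg (U ∪ C) n' ≤ 2`, together with the unclustered nodes adjacent to some
node `n'` of `C` with `Deg (U ∪ C) n' = 1`. -/
def extSet (Adj : V → V → Prop) (U C : Set V) : Set V :=
  {n ∈ U | ∃ n' ∈ C, Adj n n' ∧
      (NDeg Adj (U ∪ C) n' ≤ 2 ∨ Deg Adj (U ∪ C) n' = 1)}

/-- `Propagates Adj U C C'` : starting from the set `U` of unclustered nodes
and current cluster `C`, repeatedly adding the extension set (and removing it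
from the unclustered nodes) terminates with final cluster `C'`. -/
inductive Propagates (Adj : V → V → Prop) : Set V → Set V → Set V → Prop
  | done (U C : Set V) : extSet Adj U C = ∅ → Propagates Adj U C C
  | step (U C C' : Set V) : extSet Adj U C ≠ ∅ →
      Propagates Adj (U \ extSet Adj U C) (C ∪ extSet Adj U C) C' →
      Propagates Adj U C C'

/-- `ClusterExec Adj U Cs` : one possible execution of the clustering
algorithm on the set `U` of (still unclustered) nodes, producing the list of
clusters `Cs`.  While unclustered nodes remain, a node `n` of minimal
normalised degree among the unclustered nodes is chosen, the new cluster is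
started as `{n}` and grown by propagation; its nodes are removed from the
unclustered set. -/
inductive ClusterExec (Adj : V → V → Prop) : Set V → List (Set V) → Prop
  | nil : ClusterExec Adj ∅ []
  | cons {U : Set V} {n : V} {C : Set V} {rest : List (Set V)} :
      n ∈ U →
      (∀ m ∈ U, NDeg Adj U n ≤ NDeg Adj U m) →
      Propagates Adj (U \ {n}) {n} C →
      ClusterExec Adj (U \ C) rest →
      ClusterExec Adj U (C :: rest)

/-- A graph is connected if any two nodes are joined by a chain of
adjacent nodes. -/
def Conn (Adj : V → V → Prop) : Prop :=
  ∀ a b : V, Relation.ReflTransGen Adj a b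

end P2P


namespace P2P

section Aux
variable {V : Type*}

lemma extSet_subset (Adj : V → V → Prop) (U C : Set V) : extSet Adj U C ⊆ U :=
  fun _ h => h.1

lemma prop_sub {Adj : V → V → Prop} {U C C' : Set V}
    (h : Propagates Adj U C C') : C ⊆ C' ∧ C' ⊆ U ∪ C := by
  induction h with
  | done U C _ => exact ⟨subset_rfl, Set.subset_union_right⟩
  | step U C C' hne _ ih =>
      refine ⟨Set.subset_union_left.trans ih.1, ih.2.trans ?_⟩
      intro x hx
      rcases hx with hx | (hx | hx)
      · exact Or.inl hx.1
      · exact Or.inr hx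
      · exact Or.inl (extSet_subset Adj U C hx)

lemma prop_eq {Adj : V → V → Prop} {U C C' : Set V}
    (h : Propagates Adj U C C') (hd : Disjoint U C) (hCC : C' = C) :
    extSet Adj U C = ∅ := by
  cases h with
  | done _ _ hE => exact hE
  | step _ _ _ hne hinner =>
      exfalso
      obtain ⟨x, hx⟩ := Set.nonempty_iff_ne_empty.mpr hne
      have hxC : x ∈ C := by
        have := (prop_sub hinner).1 (Set.mem_union_right _ hx)
        rwa [hCC] at this
      exact Set.disjoint_left.mp hd (extSet_subset Adj U C hx) hxC

lemma diff_union {U : Set V} {n : V} (hn : n ∈ U) : (U \ {n}) ∪ {n} = U := by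
  rw [Set.diff_union_self, Set.union_eq_self_of_subset_right]
  simpa using hn

lemma singleton_info {Adj : V → V → Prop} {U : Set V} {n : V} (hn : n ∈ U)
    (hprop : Propagates Adj (U \ {n}) {n} {n}) {x : V}
    (hx : x ∈ U) (hxn : x ≠ n) (hadj : Adj x n) :
    3 ≤ NDeg Adj U n := by
  have hE : extSet Adj (U \ {n}) {n} = ∅ :=
    prop_eq hprop Set.disjoint_sdiff_left rfl
  by_contra hlt
  have hxe : x ∈ extSet Adj (U \ {n}) {n} := by
    refine ⟨⟨hx, by simpa using hxn⟩, n, rfl, hadj, ?_⟩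
    rw [diff_union hn]
    left; omega
  rw [hE] at hxe
  exact hxe

lemma pair_info {Adj : V → V → Prop} {U : Set V} {n m : V} (hn : n ∈ U)
    (hnm : m ≠ n)
    (hprop : Propagates Adj (U \ {n}) {n} ({n, m} : Set V)) :
    Adj m n ∧ ({x ∈ U | x ≠ n ∧ Adj x n} : Set V) = {m} ∧
      extSet Adj (U \ {n, m}) {n, m} = ∅ := by
  obtain ⟨C', hC', hprop'⟩ :
      ∃ C', C' = ({n, m} : Set V) ∧ Propagates Adj (U \ {n}) {n} C' :=
    ⟨_, rfl, hprop⟩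
  cases hprop' with
  | done _ _ hE =>
      exfalso
      have : m ∈ ({n} : Set V) := by rw [hC']; simp
      simp at this
      exact hnm this
  | step _ _ _ hne hinner =>
      subst hC'
      set E := extSet Adj (U \ {n}) {n} with hEdef
      have hsub : ({n} : Set V) ∪ E ⊆ {n, m} := (prop_sub hinner).1
      have hEU : E ⊆ U \ {n} := extSet_subset _ _ _
      have hEm : E = {m} := by
        apply Set.Subset.antisymm
        · intro x hx
          have hx2 : x ∈ ({n, m} : Set V) := hsub (Set.mem_union_right _ hx)
          have hxn : x ≠ n := (hEU hx).2
          rcases hx2 with h | h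
          · exact absurd h hxn
          · exact h
        · obtain ⟨x, hx⟩ := Set.nonempty_iff_ne_empty.mpr hne
          have hx2 : x ∈ ({n, m} : Set V) := hsub (Set.mem_union_right _ hx)
          have hxn : x ≠ n := (hEU hx).2
          have hxm : x = m := by rcases hx2 with h | h; exact absurd h hxn; exact h
          intro y hy
          simp only [Set.mem_singleton_iff] at hy
          rwa [hy, ← hxm]
      have hmE : m ∈ E := by rw [hEm]; rfl
      obtain ⟨hmU, n', hn', hadj, hcond⟩ := hmE
      rw [Set.mem_singleton_iff] at hn'
      rw [hn'] at hadj hcond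
      rw [diff_union hn] at hcond
      refine ⟨hadj, ?_, ?_⟩
      · apply Set.Subset.antisymm
        · intro x hx
          obtain ⟨hxU, hxn, hxadj⟩ := hx
          have : x ∈ E := ⟨⟨hxU, by simpa using hxn⟩, n, rfl, hxadj, by rw [diff_union hn]; exact hcond⟩
          rwa [hEm] at this
        · intro x hx
          simp only [Set.mem_singleton_iff] at hx
          subst hx
          exact ⟨hmU.1, hmU.2, hadj⟩
      · have hinner' : Propagates Adj (U \ {n, m}) ({n, m} : Set V) ({n, m} : Set V) := by
          have h1 : (U \ {n}) \ E = U \ {n, m} := by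
            rw [hEm, Set.diff_diff, Set.singleton_union]
          have h2 : ({n} : Set V) ∪ E = {n, m} := by
            rw [hEm, Set.singleton_union]
          rwa [h1, h2] at hinner
        exact prop_eq hinner' Set.disjoint_sdiff_left rfl

lemma ndeg_le_deg [Finite V] (Adj : V → V → Prop) (N : Set V) (x : V) :
    NDeg Adj N x ≤ Deg Adj N x :=
  Set.ncard_le_ncard (fun m hm => ⟨hm.1, hm.2.1, hm.2.2.1⟩) (Set.toFinite _)

lemma deg_diff_le [Finite V] (Adj : V → V → Prop) (U : Set V) (n x : V) :
    Deg Adj U x ≤ Deg Adj (U \ {n}) x + 1 := by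
  have hsub : ({m ∈ U | m ≠ x ∧ Adj m x} : Set V) ⊆
      ({m ∈ U \ {n} | m ≠ x ∧ Adj m x} : Set V) ∪ {n} := by
    intro m hm
    by_cases hmn : m = n
    · right; simp [hmn]
    · left; exact ⟨⟨hm.1, by simpa using hmn⟩, hm.2⟩
  calc Deg Adj U x ≤ (({m ∈ U \ {n} | m ≠ x ∧ Adj m x} : Set V) ∪ {n}).ncard :=
        Set.ncard_le_ncard hsub (Set.toFinite _)
    _ ≤ Deg Adj (U \ {n}) x + ({n} : Set V).ncard := Set.ncard_union_le _ _
    _ = Deg Adj (U \ {n}) x + 1 := by rw [Set.ncard_singleton]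

lemma exists_nbr [Finite V] {Adj : V → V → Prop} {U : Set V} {x : V}
    (h : 1 ≤ Deg Adj U x) : ∃ m, m ∈ U ∧ m ≠ x ∧ Adj m x := by
  have : ({m ∈ U | m ≠ x ∧ Adj m x} : Set V).Nonempty := by
    rw [← Set.ncard_pos (Set.toFinite _)]
    exact h
  exact this

lemma exists_nbr2 [Finite V] {Adj : V → V → Prop} {U : Set V} {w : V}
    (h : 2 ≤ Deg Adj U w) (m : V) :
    ∃ x, x ∈ U ∧ x ≠ w ∧ Adj x w ∧ x ≠ m := by
  by_contra h'
  push_neg at h'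
  have hsub : ({x ∈ U | x ≠ w ∧ Adj x w} : Set V) ⊆ {m} := by
    intro x hx
    simp only [Set.mem_singleton_iff]
    exact h' x hx.1 hx.2.1 hx.2.2
  have := Set.ncard_le_ncard hsub (Set.toFinite _)
  rw [Set.ncard_singleton] at this
  have hle : Deg Adj U w ≤ 1 := this
  omega

lemma ndeg_mem [Finite V] {Adj : V → V → Prop} {U : Set V} {m : V}
    (h : 1 ≤ NDeg Adj U m) :
    ∃ w, w ∈ U ∧ w ≠ m ∧ Adj w m ∧ 1 < Deg Adj U w := by
  have : ({w ∈ U | w ≠ m ∧ Adj w m ∧ 1 < Deg Adj U w} : Set V).Nonempty := by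
    rw [← Set.ncard_pos (Set.toFinite _)]
    exact h
  obtain ⟨w, hw⟩ := this
  exact ⟨w, hw.1, hw.2.1, hw.2.2.1, hw.2.2.2⟩

lemma mindeg_two [Finite V] {Adj : V → V → Prop} {U : Set V} {n : V}
    (h : ∀ m ∈ U, 3 ≤ NDeg Adj U m) :
    ∀ x ∈ U \ {n}, 2 ≤ Deg Adj (U \ {n}) x := by
  intro x hx
  have h1 : 3 ≤ Deg Adj U x := le_trans (h x hx.1) (ndeg_le_deg Adj U x)
  have h2 := deg_diff_le Adj U n x
  omega

lemma cluster_facts {Adj : V → V → Prop} {U C : Set V} {n : V} (hn : n ∈ U)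
    (hprop : Propagates Adj (U \ {n}) {n} C) : n ∈ C ∧ C ⊆ U := by
  obtain ⟨h1, h2⟩ := prop_sub hprop
  refine ⟨h1 rfl, ?_⟩
  intro x hx
  rcases h2 hx with h | h
  · exact h.1
  · simp only [Set.mem_singleton_iff] at h
    rwa [h]

lemma len_le [Finite V] {Adj : V → V → Prop} {U : Set V} {Cs : List (Set V)}
    (h : ClusterExec Adj U Cs) : Cs.length ≤ U.ncard := by
  induction h with
  | nil => simp
  | @cons U n C rest hn hmin hprop hrest ih =>
      obtain ⟨hnC, hCU⟩ := cluster_facts hn hprop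
      have hdiff : (U \ C).ncard = U.ncard - C.ncard := Set.ncard_diff hCU (Set.toFinite _)
      have hpos : 1 ≤ C.ncard := (Set.ncard_pos (Set.toFinite _)).mpr ⟨n, hnC⟩
      have hle : C.ncard ≤ U.ncard := Set.ncard_le_ncard hCU (Set.toFinite _)
      simp only [List.length_cons]
      omega

lemma two_le [Finite V] {Adj : V → V → Prop} {U : Set V} {Cs : List (Set V)}
    (h : ClusterExec Adj U Cs) :
    (∀ x ∈ U, 2 ≤ Deg Adj U x) → U.Nonempty → Cs.length + 2 ≤ U.ncard := by
  induction h with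
  | nil => intro _ hne; exact absurd hne (by simp)
  | @cons U n C rest hn hmin hprop hrest ih =>
      intro hdeg hne
      obtain ⟨hnC, hCU⟩ := cluster_facts hn hprop
      have hdiff : (U \ C).ncard = U.ncard - C.ncard := Set.ncard_diff hCU (Set.toFinite _)
      have hpos : 1 ≤ C.ncard := (Set.ncard_pos (Set.toFinite _)).mpr ⟨n, hnC⟩
      have hle : C.ncard ≤ U.ncard := Set.ncard_le_ncard hCU (Set.toFinite _)
      by_cases h3 : 3 ≤ C.ncard
      · have := len_le hrest
        simp only [List.length_cons]
        omega
      · have h12 : C.ncard = 1 ∨ C.ncard = 2 := by omega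
        rcases h12 with h1 | h2
        · -- singleton cluster
          obtain ⟨a, ha⟩ := Set.ncard_eq_one.mp h1
          have han : C = {n} := by
            rw [ha]; rw [ha] at hnC
            simp only [Set.mem_singleton_iff] at hnC
            rw [hnC]
          rw [han] at hprop hrest
          obtain ⟨x, hxU, hxn, hxadj⟩ :=
            exists_nbr (Adj := Adj) (U := U) (x := n) (by have := hdeg n hn; omega)
          have hndeg : 3 ≤ NDeg Adj U n := singleton_info hn hprop hxU hxn hxadj
          have hall : ∀ m ∈ U, 3 ≤ NDeg Adj U m := fun m hm => le_trans hndeg (hmin m hm)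
          have hmind := mindeg_two (n := n) hall
          have hne' : (U \ {n}).Nonempty := ⟨x, hxU, by simpa using hxn⟩
          rw [han] at ih
          have := ih hmind hne'
          have hd1 : (U \ ({n} : Set V)).ncard = U.ncard - 1 := by
            rw [Set.ncard_diff (by simpa using hn) (Set.toFinite _), Set.ncard_singleton]
          simp only [List.length_cons]
          omega
        · -- pair cluster: impossible since min degree ≥ 2
          exfalso
          obtain ⟨a, b, hab, hCab⟩ := Set.ncard_eq_two.mp h2
          have hm : ∃ m, m ≠ n ∧ C = ({n, m} : Set V) := by
            rw [hCab] at hnC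
            simp only [Set.mem_insert_iff, Set.mem_singleton_iff] at hnC
            rcases hnC with h | h
            · subst h
              exact ⟨b, hab.symm, hCab⟩
            · subst h
              exact ⟨a, hab, by rw [hCab, Set.pair_comm]⟩
          obtain ⟨m, hmn, hCnm⟩ := hm
          rw [hCnm] at hprop
          obtain ⟨hadj, hnbrs, hext⟩ := pair_info hn hmn hprop
          have hdeg1 : Deg Adj U n = 1 := by
            unfold Deg; rw [hnbrs, Set.ncard_singleton]
          have := hdeg n hn
          omega

lemma edge_len [Finite V] {Adj : V → V → Prop} (hsymm : Symmetric Adj)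
    {U : Set V} {Cs : List (Set V)} (h : ClusterExec Adj U Cs) :
    (∃ x y, x ∈ U ∧ y ∈ U ∧ x ≠ y ∧ Adj x y) → Cs.length + 1 ≤ U.ncard := by
  induction h with
  | nil => rintro ⟨x, y, hx, _⟩; exact absurd hx (by simp)
  | @cons U n C rest hn hmin hprop hrest ih =>
      rintro ⟨x, y, hxU, hyU, hxy, hadj⟩
      obtain ⟨hnC, hCU⟩ := cluster_facts hn hprop
      have hdiff : (U \ C).ncard = U.ncard - C.ncard := Set.ncard_diff hCU (Set.toFinite _)
      have hpos : 1 ≤ C.ncard := (Set.ncard_pos (Set.toFinite _)).mpr ⟨n, hnC⟩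
      have hle : C.ncard ≤ U.ncard := Set.ncard_le_ncard hCU (Set.toFinite _)
      by_cases h2 : 2 ≤ C.ncard
      · have := len_le hrest
        simp only [List.length_cons]
        omega
      · have h1 : C.ncard = 1 := by omega
        obtain ⟨a, ha⟩ := Set.ncard_eq_one.mp h1
        have han : C = {n} := by
          rw [ha]; rw [ha] at hnC
          simp only [Set.mem_singleton_iff] at hnC
          rw [hnC]
        rw [han] at hprop hrest ih
        have hd1 : (U \ ({n} : Set V)).ncard = U.ncard - 1 := by
          rw [Set.ncard_diff (by simpa using hn) (Set.toFinite _), Set.ncard_singleton]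
        by_cases hiso : ∃ z, z ∈ U ∧ z ≠ n ∧ Adj z n
        · obtain ⟨z, hzU, hzn, hzadj⟩ := hiso
          have hndeg : 3 ≤ NDeg Adj U n := singleton_info hn hprop hzU hzn hzadj
          have hall : ∀ m ∈ U, 3 ≤ NDeg Adj U m := fun m hm => le_trans hndeg (hmin m hm)
          have hmind := mindeg_two (n := n) hall
          have hne' : (U \ {n}).Nonempty := ⟨z, hzU, by simpa using hzn⟩
          have := two_le hrest hmind hne'
          simp only [List.length_cons]
          omega
        · push_neg at hiso
          have hxn : x ≠ n := by
            rintro rfl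
            exact hiso y hyU (fun h => hxy h.symm) (hsymm hadj)
          have hyn : y ≠ n := by
            rintro rfl
            exact hiso x hxU hxy hadj
          have := ih ⟨x, y, ⟨hxU, by simpa using hxn⟩, ⟨hyU, by simpa using hyn⟩, hxy, hadj⟩
          simp only [List.length_cons]
          omega

lemma exists_adj_of_conn [Fintype V] {Adj : V → V → Prop} (hsymm : Symmetric Adj)
    (hconn : Conn Adj) (hcard : 2 ≤ Fintype.card V) (n : V) :
    ∃ m, m ≠ n ∧ Adj m n := by
  have : Nontrivial V := Fintype.one_lt_card_iff_nontrivial.mp (by omega)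
  obtain ⟨z, hz⟩ := exists_ne n
  have key : ∀ z, Relation.ReflTransGen Adj n z → z ≠ n → ∃ m, m ≠ n ∧ Adj m n := by
    intro z h
    induction h with
    | refl => intro h; exact absurd rfl h
    | @tail b c hb hbc ih =>
        intro hcn
        by_cases hbn : b = n
        · exact ⟨c, hcn, hsymm (hbn ▸ hbc)⟩
        · exact ih hbn
  exact key z (hconn n z) hz

lemma closed_pair_absurd [Fintype V] {Adj : V → V → Prop} (hsymm : Symmetric Adj)
    (hconn : Conn Adj) (hcard : 2 < Fintype.card V) {n m : V}
    (hnbrN : ∀ x, x ≠ n → Adj x n → x = m)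
    (hnbrM : ∀ x, x ≠ m → Adj x m → x = n) : False := by
  have key : ∀ z, Relation.ReflTransGen Adj n z → z = n ∨ z = m := by
    intro z h
    induction h with
    | refl => left; rfl
    | @tail b c hb hbc ih =>
        rcases ih with h | h
        · by_cases hc : c = n
          · exact Or.inl hc
          · exact Or.inr (hnbrN c hc (hsymm (h ▸ hbc)))
        · by_cases hc : c = m
          · exact Or.inr hc
          · exact Or.inl (hnbrM c hc (hsymm (h ▸ hbc)))
  have hsub : (Set.univ : Set V) ⊆ {n, m} := by
    intro z _
    rcases key z (hconn n z) with h | h <;> simp [h]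
  have h2 : (Set.univ : Set V).ncard ≤ 2 := by
    refine le_trans (Set.ncard_le_ncard hsub (Set.toFinite _)) ?_
    refine le_trans (Set.ncard_insert_le _ _) ?_
    simp
  rw [Set.ncard_univ, Nat.card_eq_fintype_card] at h2
  omega

end Aux

end P2P

open P2P in
/-- If `G` is a finite connected graph with more than `2`
nodes and `Cs` is a clustering of its node set produced by (any execution
of) the clustering algorithm `Cluster`, then the number of (nonempty)
clusters produced is at most `|V| - 2`: clustering reduces the number of
nodes by at least `2`. -/
theorem cluster_card_le {V : Type*} [Fintype V]
    (Adj : V → V → Prop) (hsymm : Symmetric Adj) (hconn : Conn Adj)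
    (hcard : 2 < Fintype.card V)
    (Cs : List (Set V)) (hexec : ClusterExec Adj Set.univ Cs) :
    Cs.length ≤ Fintype.card V - 2 := by
  obtain ⟨U, hU, hexec'⟩ : ∃ U, U = (Set.univ : Set V) ∧ ClusterExec Adj U Cs :=
    ⟨_, rfl, hexec⟩
  cases hexec' with
  | nil =>
      exfalso
      have hv : Nonempty V := Fintype.card_pos_iff.mp (by omega)
      obtain ⟨v⟩ := hv
      have : v ∈ (∅ : Set V) := by rw [hU]; trivial
      exact this
  | @cons U n C rest hn hmin hprop hrest =>
      subst hU
      have hNuniv : (Set.univ : Set V).ncard = Fintype.card V := by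
        rw [Set.ncard_univ, Nat.card_eq_fintype_card]
      obtain ⟨hnC, hCU⟩ := cluster_facts hn hprop
      have hle : C.ncard ≤ Fintype.card V := by
        rw [← hNuniv]; exact Set.ncard_le_ncard hCU (Set.toFinite _)
      have hpos : 1 ≤ C.ncard := (Set.ncard_pos (Set.toFinite _)).mpr ⟨n, hnC⟩
      by_cases h3 : 3 ≤ C.ncard
      · have hlen := len_le hrest
        have hdiff : ((Set.univ : Set V) \ C).ncard = Fintype.card V - C.ncard := by
          rw [Set.ncard_diff hCU (Set.toFinite _), hNuniv]
        simp only [List.length_cons]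
        omega
      · have h12 : C.ncard = 1 ∨ C.ncard = 2 := by omega
        rcases h12 with h1 | h2
        · -- singleton first cluster
          obtain ⟨a, ha⟩ := Set.ncard_eq_one.mp h1
          have han : C = {n} := by
            rw [ha]; rw [ha] at hnC
            simp only [Set.mem_singleton_iff] at hnC; rw [hnC]
          rw [han] at hprop hrest
          obtain ⟨m, hmn, hadj⟩ := exists_adj_of_conn hsymm hconn (by omega) n
          have hndeg : 3 ≤ NDeg Adj Set.univ n :=
            singleton_info hn hprop (Set.mem_univ m) hmn hadj
          have hall : ∀ x ∈ (Set.univ : Set V), 3 ≤ NDeg Adj Set.univ x :=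
            fun x hx => le_trans hndeg (hmin x hx)
          have hmind := mindeg_two (n := n) hall
          have hne' : ((Set.univ : Set V) \ {n}).Nonempty :=
            ⟨m, Set.mem_univ m, by simpa using hmn⟩
          have h2l := two_le hrest hmind hne'
          have hd1 : ((Set.univ : Set V) \ {n}).ncard = Fintype.card V - 1 := by
            rw [Set.ncard_diff (by simp) (Set.toFinite _), hNuniv, Set.ncard_singleton]
          simp only [List.length_cons]
          omega
        · -- first cluster is a pair {n, m}
          obtain ⟨a, b, hab, hCab⟩ := Set.ncard_eq_two.mp h2
          have hm : ∃ m, m ≠ n ∧ C = ({n, m} : Set V) := by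
            rw [hCab] at hnC
            simp only [Set.mem_insert_iff, Set.mem_singleton_iff] at hnC
            rcases hnC with h | h
            · subst h; exact ⟨b, hab.symm, hCab⟩
            · subst h; exact ⟨a, hab, by rw [hCab, Set.pair_comm]⟩
          obtain ⟨m, hmn, hCnm⟩ := hm
          rw [hCnm] at hprop hrest
          obtain ⟨hadj, hnbrs, hext⟩ := pair_info hn hmn hprop
          have hdeg1 : Deg Adj Set.univ n = 1 := by
            unfold Deg; rw [hnbrs, Set.ncard_singleton]
          have hnbrN : ∀ x, x ≠ n → Adj x n → x = m := by
            intro x hxn hxadj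
            have hx : x ∈ ({x ∈ Set.univ | x ≠ n ∧ Adj x n} : Set V) :=
              ⟨Set.mem_univ x, hxn, hxadj⟩
            rw [hnbrs] at hx
            simpa using hx
          have hdnm : ((Set.univ : Set V) \ {n, m}).ncard = Fintype.card V - 2 := by
            rw [Set.ncard_diff (by simp) (Set.toFinite _), hNuniv,
              Set.ncard_pair hmn.symm]
          by_cases hx : ∃ x, x ∈ (Set.univ : Set V) \ {n, m} ∧ Adj x m
          · obtain ⟨x, hxmem, hxm⟩ := hx
            have huni : ((Set.univ : Set V) \ {n, m}) ∪ {n, m} = Set.univ :=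
              Set.diff_union_of_subset (by simp)
            have hcond : ¬(NDeg Adj Set.univ m ≤ 2 ∨ Deg Adj Set.univ m = 1) := by
              intro hcond
              have hxe : x ∈ extSet Adj ((Set.univ : Set V) \ {n, m}) {n, m} := by
                refine ⟨hxmem, m, by simp, hxm, ?_⟩
                rw [huni]; exact hcond
              rw [hext] at hxe; exact hxe
            push_neg at hcond
            obtain ⟨hcond1, hcond2⟩ := hcond
            obtain ⟨w, hwU, hwm, hwadj, hwdeg⟩ :=
              ndeg_mem (Adj := Adj) (U := (Set.univ : Set V)) (m := m) (by omega)
            have hwn : w ≠ n := by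
              rintro rfl; rw [hdeg1] at hwdeg; omega
            obtain ⟨x2, hx2U, hx2w, hx2adj, hx2m⟩ :=
              exists_nbr2 (Adj := Adj) (U := (Set.univ : Set V)) (w := w) (by omega) m
            have hx2n : x2 ≠ n := by
              rintro rfl
              exact hwm (hnbrN w hwn (hsymm hx2adj))
            have hel := edge_len hsymm hrest
              ⟨x2, w, ⟨Set.mem_univ _, by simp [hx2n, hx2m]⟩,
                ⟨Set.mem_univ _, by simp [hwn, hwm]⟩, hx2w, hx2adj⟩
            simp only [List.length_cons]
            omega
          · exfalso
            push_neg at hx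
            refine closed_pair_absurd hsymm hconn hcard hnbrN ?_
            intro x hxm hxadj
            by_contra hxn
            exact hx x ⟨Set.mem_univ x, by simp [hxn, hxm]⟩ hxadj
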